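/- For every x in [ε,Λ] one has ∫_ε^Λ 1/(y + x + |y − x|) dy ≤ (1/2)·(1 + ln(Λ/ε)). -/

import Mathlib

open Real Set MeasureTheory intervalIntegral

theorem stmt_8 (ε Λ : ℝ) (hε : 0 < ε) (hεΛ : ε < Λ) (x : ℝ) (hx : x ∈ Set.Icc ε Λ) :
    (∫ y in ε..Λ, 1 / (y + x + |y - x|)) ≤ (1 / 2) * (1 + Real.log (Λ / ε)) := by
  obtain ⟨hx1, hx2⟩ := hx
  have hx0 : 0 < x := hε.trans_le hx1
  have hcont : ContinuousOn (fun y => 1 / (y + x + |y - x|)) (Icc ε Λ) := by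
    apply ContinuousOn.div continuousOn_const
    · exact (continuousOn_id.add continuousOn_const).add
        ((continuousOn_id.sub continuousOn_const).abs)
    · intro y hy
      have h0 := abs_nonneg (y - x)
      have : (0:ℝ) < y + x + |y - x| := by nlinarith [hy.1]
      linarith
  have hint1 : IntervalIntegrable (fun y => 1 / (y + x + |y - x|)) volume ε x :=
    ((hcont.mono (Icc_subset_Icc le_rfl hx2)).intervalIntegrable_of_Icc hx1)
  have hint2 : IntervalIntegrable (fun y => 1 / (y + x + |y - x|)) volume x Λ :=
    ((hcont.mono (Icc_subset_Icc hx1 le_rfl)).intervalIntegrable_of_Icc hx2)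
  rw [← intervalIntegral.integral_add_adjacent_intervals hint1 hint2]
  have h1 : (∫ y in ε..x, 1 / (y + x + |y - x|)) = (x - ε) * (1 / (2 * x)) := by
    rw [intervalIntegral.integral_congr (g := fun _ => 1 / (2 * x)) ?_,
      intervalIntegral.integral_const, smul_eq_mul]
    intro y hy
    rw [uIcc_of_le hx1] at hy
    have habs : |y - x| = x - y := by rw [abs_of_nonpos (by linarith [hy.2] : y - x ≤ 0)]; ring
    simp only [habs]
    ring_nf
  have h2 : (∫ y in x..Λ, 1 / (y + x + |y - x|)) = (1 / 2) * Real.log (Λ / x) := by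
    have heq : (∫ y in x..Λ, 1 / (y + x + |y - x|)) = ∫ y in x..Λ, (1/2) * (1 / y) := by
      apply intervalIntegral.integral_congr
      intro y hy
      rw [uIcc_of_le hx2] at hy
      have hy0 : 0 < y := lt_of_lt_of_le hx0 hy.1
      have habs : |y - x| = y - x := abs_of_nonneg (by linarith [hy.1])
      simp only [habs]
      field_simp
      ring
      exact mul_inv_cancel₀ hy0.ne'
    rw [heq, intervalIntegral.integral_const_mul, integral_one_div]
    rw [uIcc_of_le hx2]
    intro h
    exact absurd h.1 (not_le.mpr hx0)
  rw [h1, h2]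
  have hlog : Real.log (Λ / x) ≤ Real.log (Λ / ε) := by
    apply Real.log_le_log (div_pos (hε.trans hεΛ) hx0)
    exact div_le_div_of_nonneg_left (le_of_lt (hε.trans hεΛ)) hε hx1
  have hfrac : (x - ε) * (1 / (2 * x)) ≤ 1 / 2 := by
    rw [mul_one_div, div_le_div_iff₀ (by linarith) (by norm_num)]
    nlinarith
  linarith
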